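/- Let k ≥ 1 be an integer and let K, K₁ ∈ ℝ with K ≤ K₁ and K₁ > 0. Let R₀ > 0 satisfy F_K(R₀) = F_{K₁}(π/(2√K₁)), where F_K(s) = ∫₀^s sn_K(r)^{k−1} dr, and let f : [0, R₀] → [0, π/(2√K₁)] be the comparison function defined by F_{K₁}(f(s)) = F_K(s). Then f(s) ≥ s for all s ∈ [0, R₀], and f′(s) ≥ 1 for all s ∈ (0, R₀). -/

import Mathlib

open Real Set

/-- The generalized sine function `sn_K` of the space form of curvature `K`. -/
noncomputable def sn (K r : ℝ) : ℝ :=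
  if 0 < K then Real.sin (r * Real.sqrt K) / Real.sqrt K
  else if K = 0 then r
  else Real.sinh (r * Real.sqrt (-K)) / Real.sqrt (-K)

/-- `F_K(s) = ∫₀^s sn_K(r)^{k−1} dr`. -/
noncomputable def Fsn (K : ℝ) (k : ℕ) (s : ℝ) : ℝ :=
  ∫ r in (0 : ℝ)..s, sn K r ^ (k - 1)

lemma sn_cont (K : ℝ) : Continuous (sn K) := by
  unfold sn; split_ifs <;> fun_prop

lemma sn_integrable (K : ℝ) (n : ℕ) (a b : ℝ) :
    IntervalIntegrable (fun r => sn K r ^ n) MeasureTheory.volume a b :=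
  ((sn_cont K).pow n).intervalIntegrable a b

lemma Fsn_hasDerivAt (K : ℝ) (k : ℕ) (s : ℝ) :
    HasDerivAt (Fsn K k) (sn K s ^ (k - 1)) s :=
  intervalIntegral.integral_hasDerivAt_right (sn_integrable K (k-1) 0 s)
    (((sn_cont K).pow (k-1)).aestronglyMeasurable.stronglyMeasurableAtFilter)
    (((sn_cont K).pow (k-1)).continuousAt)

lemma Fsn_add (K : ℝ) (k : ℕ) (a b : ℝ) :
    Fsn K k b = Fsn K k a + ∫ r in a..b, sn K r ^ (k - 1) := by
  rw [Fsn, Fsn, intervalIntegral.integral_add_adjacent_intervals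
    (sn_integrable K (k-1) 0 a) (sn_integrable K (k-1) a b)]

lemma Fsn_zero (K : ℝ) (k : ℕ) : Fsn K k 0 = 0 := by simp [Fsn]

lemma sn_of_pos {K : ℝ} (h : 0 < K) (r : ℝ) :
    sn K r = Real.sin (r * Real.sqrt K) / Real.sqrt K := if_pos h

lemma sn_of_zero (r : ℝ) : sn 0 r = r := by simp [sn]

lemma sn_of_neg {K : ℝ} (h : K < 0) (r : ℝ) :
    sn K r = Real.sinh (r * Real.sqrt (-K)) / Real.sqrt (-K) := by
  rw [sn, if_neg (by linarith), if_neg (by linarith)]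

lemma sn_pos {K K₁ : ℝ} (hKK : K ≤ K₁) (hK₁ : 0 < K₁) {r : ℝ}
    (h0 : 0 < r) (hr : r * Real.sqrt K₁ < π) : 0 < sn K r := by
  rcases lt_trichotomy K 0 with hK | hK | hK
  · rw [sn_of_neg hK]
    have h1 : 0 < Real.sqrt (-K) := Real.sqrt_pos.2 (by linarith)
    exact div_pos (by positivity) h1
  · rw [hK, sn_of_zero]; exact h0
  · rw [sn_of_pos hK]
    have h1 : 0 < Real.sqrt K := Real.sqrt_pos.2 hK
    have h2 : r * Real.sqrt K ≤ r * Real.sqrt K₁ :=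
      mul_le_mul_of_nonneg_left (Real.sqrt_le_sqrt hKK) h0.le
    exact div_pos (Real.sin_pos_of_pos_of_lt_pi (by positivity) (lt_of_le_of_lt h2 hr)) h1

lemma sn_nonneg {K K₁ : ℝ} (hKK : K ≤ K₁) (hK₁ : 0 < K₁) {r : ℝ}
    (h0 : 0 ≤ r) (hr : r * Real.sqrt K₁ ≤ π) : 0 ≤ sn K r := by
  rcases lt_trichotomy K 0 with hK | hK | hK
  · rw [sn_of_neg hK]
    have h1 : 0 < Real.sqrt (-K) := Real.sqrt_pos.2 (by linarith)
    exact div_nonneg (Real.sinh_nonneg_iff.2 (by positivity)) h1.le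
  · rw [hK, sn_of_zero]; exact h0
  · rw [sn_of_pos hK]
    have h1 : 0 < Real.sqrt K := Real.sqrt_pos.2 hK
    have h2 : r * Real.sqrt K ≤ r * Real.sqrt K₁ :=
      mul_le_mul_of_nonneg_left (Real.sqrt_le_sqrt hKK) h0
    exact div_nonneg (Real.sin_nonneg_of_nonneg_of_le_pi (by positivity) (le_trans h2 hr)) h1.le

lemma mul_sin_le {x c : ℝ} (hx : 0 ≤ x) (hx' : x ≤ π) (h0 : 0 ≤ c) (h1 : c ≤ 1) :
    c * Real.sin x ≤ Real.sin (c * x) := by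
  have := strictConcaveOn_sin_Icc.concaveOn.2 (x := 0) (y := x)
    (by constructor <;> simp [Real.pi_nonneg]) ⟨hx, hx'⟩ (by linarith : (0:ℝ) ≤ 1 - c) h0
    (by ring)
  simpa using this

lemma sn_le_sn {K K₁ : ℝ} (hKK : K ≤ K₁) (hK₁ : 0 < K₁) {r : ℝ}
    (h0 : 0 ≤ r) (hr : r * Real.sqrt K₁ ≤ π / 2) : sn K₁ r ≤ sn K r := by
  have hb : 0 < Real.sqrt K₁ := Real.sqrt_pos.2 hK₁
  have hsin_le : Real.sin (r * Real.sqrt K₁) / Real.sqrt K₁ ≤ r := by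
    rw [div_le_iff₀ hb]
    exact Real.sin_le (by positivity)
  rw [sn_of_pos hK₁]
  rcases lt_trichotomy K 0 with hK | hK | hK
  · rw [sn_of_neg hK]
    have h1 : 0 < Real.sqrt (-K) := Real.sqrt_pos.2 (by linarith)
    refine le_trans hsin_le ?_
    rw [le_div_iff₀ h1]
    exact Real.self_le_sinh_iff.2 (by positivity)
  · subst hK; rw [sn_of_zero]; exact hsin_le
  · rw [sn_of_pos hK]
    set a := Real.sqrt K with ha_def
    set b := Real.sqrt K₁ with hb_def
    have ha : 0 < a := Real.sqrt_pos.2 hK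
    have hab : a ≤ b := Real.sqrt_le_sqrt hKK
    have key : a / b * Real.sin (r * b) ≤ Real.sin (a / b * (r * b)) :=
      mul_sin_le (by positivity) (by linarith [Real.pi_pos]) (by positivity)
        (by rw [div_le_one hb]; exact hab)
    have harg : a / b * (r * b) = r * a := by field_simp
    rw [harg] at key
    rw [div_le_div_iff₀ hb ha]
    calc Real.sin (r * b) * a = (a / b * Real.sin (r * b)) * b := by field_simp
    _ ≤ Real.sin (r * a) * b := mul_le_mul_of_nonneg_right key hb.le

lemma Fsn_lt (K : ℝ) (k : ℕ) {a b : ℝ} (hab : a < b)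
    (hpos : ∀ r ∈ Ioo a b, 0 < sn K r) : Fsn K k a < Fsn K k b := by
  rw [Fsn_add K k a b]
  have := intervalIntegral.intervalIntegral_pos_of_pos_on (sn_integrable K (k-1) a b)
    (fun r hr => pow_pos (hpos r hr) (k-1)) hab
  linarith

lemma Fsn_mono (K : ℝ) (k : ℕ) {a b : ℝ} (hab : a ≤ b)
    (h : ∀ r ∈ Icc a b, 0 ≤ sn K r) : Fsn K k a ≤ Fsn K k b := by
  rw [Fsn_add K k a b]
  have := intervalIntegral.integral_nonneg (μ := MeasureTheory.volume) hab (fun u hu => pow_nonneg (h u hu) (k-1))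
  linarith

lemma Fsn_le_Fsn (k : ℕ) {K K₁ : ℝ} (hKK : K ≤ K₁) (hK₁ : 0 < K₁) {s : ℝ}
    (h0 : 0 ≤ s) (hs : s * Real.sqrt K₁ ≤ π / 2) : Fsn K₁ k s ≤ Fsn K k s := by
  rw [Fsn, Fsn]
  apply intervalIntegral.integral_mono_on h0 (sn_integrable K₁ (k-1) 0 s)
    (sn_integrable K (k-1) 0 s)
  intro r hr
  have hrb : r * Real.sqrt K₁ ≤ π / 2 :=
    le_trans (mul_le_mul_of_nonneg_right hr.2 (Real.sqrt_nonneg _)) hs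
  exact pow_le_pow_left₀ (sn_nonneg le_rfl hK₁ hr.1 (by linarith [Real.pi_pos]))
    (sn_le_sn hKK hK₁ hr.1 hrb) _

lemma key_aux (k : ℕ) (K K₁ : ℝ) (σ σ' : ℝ → ℝ)
    (hd : ∀ y, HasDerivAt σ (σ' y) y) (hσ0 : σ 0 = 0) {x : ℝ} (hx0 : 0 ≤ x)
    (hs : ∀ y ∈ Ioo (0:ℝ) x, sn K (σ y) ^ (k - 1) * σ' y ≤ sn K₁ y ^ (k - 1)) :
    Fsn K k (σ x) ≤ Fsn K₁ k x := by
  have hD : ∀ y, HasDerivAt (fun y => Fsn K₁ k y - Fsn K k (σ y))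
      (sn K₁ y ^ (k-1) - sn K (σ y) ^ (k-1) * σ' y) y := by
    intro y
    have h1 : HasDerivAt (fun y => Fsn K k (σ y)) (sn K (σ y) ^ (k-1) * σ' y) y := by
      exact (HasDerivAt.comp y (Fsn_hasDerivAt K k (σ y)) (hd y))
    exact (Fsn_hasDerivAt K₁ k y).sub h1
  have hmono : MonotoneOn (fun y => Fsn K₁ k y - Fsn K k (σ y)) (Icc 0 x) := by
    apply monotoneOn_of_deriv_nonneg (convex_Icc 0 x)
      (fun y _ => (hD y).differentiableAt.continuousAt.continuousWithinAt)
      (fun y _ => (hD y).differentiableAt.differentiableWithinAt)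
    intro y hy
    rw [(hD y).deriv]
    rw [interior_Icc] at hy
    have := hs y hy
    linarith
  have h0 := hmono ⟨le_rfl, hx0⟩ ⟨hx0, le_rfl⟩ hx0
  simp only [hσ0, Fsn_zero, sub_zero] at h0
  linarith


set_option maxHeartbeats 1000000

lemma star_lemma (k : ℕ) {K K₁ : ℝ} (hKK : K < K₁) (hK₁ : 0 < K₁) {x s : ℝ}
    (hx0 : 0 ≤ x) (hxb : x * Real.sqrt K₁ ≤ π / 2)
    (hs0 : 0 ≤ s) (hsb : s * Real.sqrt K₁ ≤ π / 2)
    (heq : Fsn K₁ k x = Fsn K k s) : sn K₁ x ≤ sn K s := by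
  have hb : 0 < Real.sqrt K₁ := Real.sqrt_pos.2 hK₁
  set b := Real.sqrt K₁ with hbdef
  have hsinD : ∀ y : ℝ, HasDerivAt (fun y : ℝ => Real.sin (y * b))
      (Real.cos (y * b) * b) y := by
    intro y
    have h1 : HasDerivAt (fun y : ℝ => y * b) b y := by
      simpa using (hasDerivAt_id y).mul_const b
    exact (Real.hasDerivAt_sin (y * b)).comp y h1
  have hsnK₁ : ∀ y : ℝ, sn K₁ y = Real.sin (y * b) / b := fun y => sn_of_pos hK₁ y
  rcases lt_trichotomy K 0 with hK | hK | hK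
  · -- K < 0
    set c := Real.sqrt (-K) with hcdef
    have hc : 0 < c := Real.sqrt_pos.2 (by linarith)
    set g : ℝ → ℝ := fun y => Real.sin (y * b) / b * c with hgdef
    set σ : ℝ → ℝ := fun y => Real.arsinh (g y) / c with hσdef
    set σ' : ℝ → ℝ := fun y => Real.cos (y * b) / Real.sqrt (1 + g y ^ 2) with hσ'def
    have hgd : ∀ y, HasDerivAt g (Real.cos (y * b) * c) y := by
      intro y
      have := ((hsinD y).div_const b).mul_const c
      refine this.congr_deriv ?_
      rw [mul_div_cancel_right₀ _ hb.ne']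
    have hd : ∀ y, HasDerivAt σ (σ' y) y := by
      intro y
      have h2 := ((Real.hasDerivAt_arsinh (g y)).comp y (hgd y)).div_const c
      have hsq : 0 < Real.sqrt (1 + g y ^ 2) := Real.sqrt_pos.2 (by positivity)
      refine h2.congr_deriv ?_
      show (Real.sqrt (1 + g y ^ 2))⁻¹ * (Real.cos (y * b) * c) / c = Real.cos (y * b) / Real.sqrt (1 + g y ^ 2)
      rw [mul_div_assoc, mul_div_cancel_right₀ _ hc.ne', inv_mul_eq_div]
    have hσ0 : σ 0 = 0 := by simp [hσdef, hgdef]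
    have hσeq : ∀ y, sn K (σ y) = Real.sin (y * b) / b := by
      intro y
      rw [sn_of_neg hK, ← hcdef]
      have h1 : σ y * c = Real.arsinh (g y) := by
        simp only [hσdef]
        field_simp
      rw [h1, Real.sinh_arsinh]
      simp only [hgdef]
      field_simp
    have hσ'le : ∀ y, σ' y ≤ 1 := by
      intro y
      have h1 : (1:ℝ) ≤ Real.sqrt (1 + g y ^ 2) := by
        have h2 := Real.sq_sqrt (show (0:ℝ) ≤ 1 + g y ^ 2 by positivity)
        nlinarith [Real.sqrt_nonneg (1 + g y ^ 2), sq_nonneg (g y)]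
      rw [div_le_one (by linarith)]
      exact le_trans (Real.cos_le_one _) h1
    have hFle : Fsn K k (σ x) ≤ Fsn K₁ k x := by
      apply key_aux k K K₁ σ σ' hd hσ0 hx0
      intro y hy
      rw [hσeq y, ← hsnK₁ y]
      have h0 : 0 ≤ sn K₁ y := sn_nonneg le_rfl hK₁ hy.1.le
        (by nlinarith [Real.pi_pos, hy.2, hy.1])
      exact mul_le_of_le_one_right (pow_nonneg h0 _) (hσ'le y)
    rw [heq] at hFle
    have hσs : σ x ≤ s := by
      by_contra hcon
      push_neg at hcon
      have := Fsn_lt K k hcon (fun r hr => by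
        rw [sn_of_neg hK, ← hcdef]
        have hr0 : 0 < r := lt_of_le_of_lt hs0 hr.1
        exact div_pos (Real.sinh_pos_iff.2 (by positivity)) hc)
      linarith
    rw [hsnK₁ x, ← hσeq x, sn_of_neg hK, sn_of_neg hK, ← hcdef]
    exact (div_le_div_iff_of_pos_right hc).2 (Real.sinh_le_sinh.2 (mul_le_mul_of_nonneg_right hσs hc.le))
  · -- K = 0
    subst hK
    set σ : ℝ → ℝ := fun y => Real.sin (y * b) / b with hσdef
    set σ' : ℝ → ℝ := fun y => Real.cos (y * b) with hσ'def
    have hd : ∀ y, HasDerivAt σ (σ' y) y := by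
      intro y
      have := (hsinD y).div_const b
      refine this.congr_deriv ?_
      show Real.cos (y * b) * b / b = Real.cos (y * b)
      rw [mul_div_cancel_right₀ _ hb.ne']
    have hσ0 : σ 0 = 0 := by simp [hσdef]
    have hFle : Fsn 0 k (σ x) ≤ Fsn K₁ k x := by
      apply key_aux k 0 K₁ σ σ' hd hσ0 hx0
      intro y hy
      have h0 : 0 ≤ sn K₁ y := sn_nonneg le_rfl hK₁ hy.1.le
        (by nlinarith [Real.pi_pos, hy.2, hy.1])
      have hσy : sn 0 (σ y) = sn K₁ y := by rw [sn_of_zero, hsnK₁ y]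
      rw [hσy]
      exact mul_le_of_le_one_right (pow_nonneg h0 _) (Real.cos_le_one _)
    rw [heq] at hFle
    have hσs : σ x ≤ s := by
      by_contra hcon
      push_neg at hcon
      have := Fsn_lt 0 k hcon (fun r hr => by
        rw [sn_of_zero]; exact lt_of_le_of_lt hs0 hr.1)
      linarith
    rw [hsnK₁ x, sn_of_zero]
    exact hσs
  · -- 0 < K
    set a := Real.sqrt K with hadef
    have ha : 0 < a := Real.sqrt_pos.2 hK
    have hab : a < b := Real.sqrt_lt_sqrt hK.le hKK
    have hdivlt : a / b < 1 := (div_lt_one hb).2 hab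
    have hdivpos : 0 < a / b := div_pos ha hb
    set g : ℝ → ℝ := fun y => Real.sin (y * b) * (a / b) with hgdef
    have habs : ∀ y, |g y| ≤ a / b := by
      intro y
      simp only [hgdef]
      rw [abs_mul, abs_of_pos hdivpos]
      exact mul_le_of_le_one_left hdivpos.le (Real.abs_sin_le_one _) |>.trans le_rfl
    have hg2 : ∀ y, g y ^ 2 < 1 := by
      intro y
      nlinarith [mul_self_le_mul_self (abs_nonneg (g y)) (habs y), sq_abs (g y)]
    have hgm : ∀ y, -1 ≤ g y := fun y => by nlinarith [abs_le.1 (habs y)]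
    have hg1 : ∀ y, g y ≤ 1 := fun y => by nlinarith [abs_le.1 (habs y)]
    have hgne1 : ∀ y, g y ≠ 1 := fun y => by nlinarith [hg2 y]
    have hgnem1 : ∀ y, g y ≠ (-1) := fun y => by nlinarith [hg2 y]
    set σ : ℝ → ℝ := fun y => Real.arcsin (g y) / a with hσdef
    set σ' : ℝ → ℝ := fun y => Real.cos (y * b) / Real.sqrt (1 - g y ^ 2) with hσ'def
    have hgd : ∀ y, HasDerivAt g (Real.cos (y * b) * a) y := by
      intro y
      have := (hsinD y).mul_const (a / b)
      refine this.congr_deriv ?_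
      rw [mul_assoc, mul_div_assoc', mul_div_cancel_left₀ _ hb.ne']
    have hd : ∀ y, HasDerivAt σ (σ' y) y := by
      intro y
      have h2 := ((Real.hasDerivAt_arcsin (hgnem1 y) (hgne1 y)).comp y (hgd y)).div_const a
      have hsq : 0 < Real.sqrt (1 - g y ^ 2) := Real.sqrt_pos.2 (by nlinarith [hg2 y])
      refine h2.congr_deriv ?_
      show 1 / Real.sqrt (1 - g y ^ 2) * (Real.cos (y * b) * a) / a = Real.cos (y * b) / Real.sqrt (1 - g y ^ 2)
      rw [mul_div_assoc, mul_div_cancel_right₀ _ ha.ne', one_div, inv_mul_eq_div]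
    have hσ0 : σ 0 = 0 := by simp [hσdef, hgdef]
    have hσeq : ∀ y, sn K (σ y) = Real.sin (y * b) / b := by
      intro y
      rw [sn_of_pos hK, ← hadef]
      have h1 : σ y * a = Real.arcsin (g y) := by
        simp only [hσdef]
        field_simp
      rw [h1, Real.sin_arcsin (hgm y) (hg1 y)]
      simp only [hgdef]
      field_simp
    have hσ'le : ∀ y, 0 ≤ y → y * b ≤ π / 2 → σ' y ≤ 1 := by
      intro y hy0 hyb
      have hcos : 0 ≤ Real.cos (y * b) := Real.cos_nonneg_of_mem_Icc
        ⟨by nlinarith [Real.pi_pos], hyb⟩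
      have hpos2 : 0 < 1 - g y ^ 2 := by nlinarith [hg2 y]
      rw [div_le_one (Real.sqrt_pos.2 hpos2)]
      rw [← Real.sqrt_sq hcos]
      apply Real.sqrt_le_sqrt
      have e : g y ^ 2 = Real.sin (y * b) ^ 2 * (a / b) ^ 2 := by
        simp only [hgdef]; ring
      have h3 : (a / b) ^ 2 ≤ 1 := by nlinarith
      have h4 : Real.sin (y * b) ^ 2 * (a / b) ^ 2 ≤ Real.sin (y * b) ^ 2 * 1 :=
        mul_le_mul_of_nonneg_left h3 (sq_nonneg _)
      nlinarith [Real.sin_sq_add_cos_sq (y * b)]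
    have hFle : Fsn K k (σ x) ≤ Fsn K₁ k x := by
      apply key_aux k K K₁ σ σ' hd hσ0 hx0
      intro y hy
      rw [hσeq y, ← hsnK₁ y]
      have h0 : 0 ≤ sn K₁ y := sn_nonneg le_rfl hK₁ hy.1.le
        (by nlinarith [Real.pi_pos, hy.2, hy.1])
      exact mul_le_of_le_one_right (pow_nonneg h0 _)
        (hσ'le y hy.1.le (by nlinarith [hy.2, hy.1]))
    rw [heq] at hFle
    have hσub : σ x * a ≤ π / 2 := by
      have h1 : Real.arcsin (g x) ≤ π / 2 := Real.arcsin_le_pi_div_two _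
      have h2 : σ x * a = Real.arcsin (g x) := by
        simp only [hσdef]; field_simp
      linarith
    have hσs : σ x ≤ s := by
      by_contra hcon
      push_neg at hcon
      have := Fsn_lt K k hcon (fun r hr => by
        rw [sn_of_pos hK, ← hadef]
        have hr0 : 0 < r := lt_of_le_of_lt hs0 hr.1
        have hra : r * a < π := by
          have : r * a < σ x * a := mul_lt_mul_of_pos_right hr.2 ha
          nlinarith [Real.pi_pos]
        exact div_pos (Real.sin_pos_of_pos_of_lt_pi (by positivity) hra) ha)
      linarith
    have hσ0' : 0 ≤ σ x := by
      simp only [hσdef]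
      apply div_nonneg _ ha.le
      rw [Real.arcsin_nonneg]
      simp only [hgdef]
      apply mul_nonneg _ hdivpos.le
      apply Real.sin_nonneg_of_nonneg_of_le_pi (by positivity)
      nlinarith [Real.pi_pos]
    rw [hsnK₁ x, ← hσeq x, sn_of_pos hK, ← hadef, sn_of_pos hK, ← hadef]
    apply (div_le_div_iff_of_pos_right ha).2
    apply Real.strictMonoOn_sin.monotoneOn ?_ ?_ (mul_le_mul_of_nonneg_right hσs ha.le)
    · constructor
      · nlinarith [Real.pi_pos, mul_nonneg hσ0' ha.le]
      · exact hσub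
    · constructor
      · nlinarith [Real.pi_pos, mul_nonneg hs0 ha.le]
      · calc s * a ≤ s * b := mul_le_mul_of_nonneg_left hab.le hs0
        _ ≤ π / 2 := hsb


/-- The radial comparison function `f` between curvatures `K ≤ K₁` (with `K₁ > 0`),
defined by `F_{K₁}(f(s)) = F_K(s)` and satisfying `f′(s)·sn_{K₁}(f(s))^{k−1} = sn_K(s)^{k−1}`,
satisfies `f(s) ≥ s` and `f′(s) ≥ 1`. -/
theorem comparison_function_expands (k : ℕ) (hk : 1 ≤ k) (K K₁ : ℝ)
    (hKK : K ≤ K₁) (hK₁ : 0 < K₁) (R₀ : ℝ) (hR₀ : 0 < R₀)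
    (hF : Fsn K k R₀ = Fsn K₁ k (Real.pi / (2 * Real.sqrt K₁)))
    (f f' : ℝ → ℝ)
    (hfmem : ∀ s ∈ Icc (0 : ℝ) R₀,
      f s ∈ Icc (0 : ℝ) (Real.pi / (2 * Real.sqrt K₁)))
    (hfeq : ∀ s ∈ Icc (0 : ℝ) R₀, Fsn K₁ k (f s) = Fsn K k s)
    (hfderiv : ∀ s ∈ Ioo (0 : ℝ) R₀, HasDerivAt f (f' s) s)
    (hfode : ∀ s ∈ Ioo (0 : ℝ) R₀,
      f' s * sn K₁ (f s) ^ (k - 1) = sn K s ^ (k - 1)) :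
    (∀ s ∈ Icc (0 : ℝ) R₀, s ≤ f s) ∧ (∀ s ∈ Ioo (0 : ℝ) R₀, 1 ≤ f' s) := by
  have hb : 0 < Real.sqrt K₁ := Real.sqrt_pos.2 hK₁
  set b := Real.sqrt K₁ with hbdef
  set M : ℝ := π / (2 * b) with hMdef
  have hM : 0 < M := by positivity
  have hMb : M * b = π / 2 := by
    rw [hMdef]; field_simp
  have hle_pi2 : ∀ r : ℝ, r ≤ M → r * b ≤ π / 2 := by
    intro r hr
    calc r * b ≤ M * b := mul_le_mul_of_nonneg_right hr hb.le
    _ = π / 2 := hMb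
  -- Step 1 : R₀ ≤ M
  have hRM : R₀ ≤ M := by
    by_contra hcon
    push_neg at hcon
    set s₀ : ℝ := min R₀ (3 * M / 2) with hs₀def
    have hs₀R : s₀ ≤ R₀ := min_le_left _ _
    have hs₀M : M < s₀ := lt_min hcon (by linarith)
    have hs₀u : s₀ ≤ 3 * M / 2 := min_le_right _ _
    have hs₀mem : s₀ ∈ Icc (0:ℝ) R₀ := ⟨by linarith, hs₀R⟩
    have hfs₀ := hfmem s₀ hs₀mem
    have heqs₀ := hfeq s₀ hs₀mem
    -- Fsn K k M < Fsn K k s₀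
    have hA : Fsn K k M < Fsn K k s₀ := by
      apply Fsn_lt K k hs₀M
      intro r hr
      apply sn_pos hKK hK₁ (by linarith [hr.1])
      have : r * b < (3 * M / 2) * b := mul_lt_mul_of_pos_right (by linarith [hr.2]) hb
      nlinarith [Real.pi_pos]
    have hB : Fsn K₁ k M ≤ Fsn K k M := Fsn_le_Fsn k hKK hK₁ hM.le (hle_pi2 M le_rfl)
    have hC : Fsn K₁ k (f s₀) ≤ Fsn K₁ k M := by
      apply Fsn_mono K₁ k hfs₀.2
      intro r hr
      apply sn_nonneg le_rfl hK₁ (le_trans hfs₀.1 hr.1)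
      nlinarith [hle_pi2 r hr.2, Real.pi_pos]
    rw [heqs₀] at hC
    linarith
  -- Step 2 : s ≤ f s on [0, R₀]
  have hPart1 : ∀ s ∈ Icc (0:ℝ) R₀, s ≤ f s := by
    intro s hs
    have hsM : s ≤ M := le_trans hs.2 hRM
    have hfs := hfmem s hs
    have hcmp : Fsn K₁ k s ≤ Fsn K k s := Fsn_le_Fsn k hKK hK₁ hs.1 (hle_pi2 s hsM)
    have heqs := hfeq s hs
    by_contra hcon
    push_neg at hcon
    have hlt : Fsn K₁ k (f s) < Fsn K₁ k s := by
      apply Fsn_lt K₁ k hcon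
      intro r hr
      apply sn_pos le_rfl hK₁ (lt_of_le_of_lt hfs.1 hr.1)
      nlinarith [hle_pi2 s hsM, Real.pi_pos, mul_lt_mul_of_pos_right hr.2 hb]
    linarith
  refine ⟨hPart1, ?_⟩
  -- Step 3 : 1 ≤ f' s on (0, R₀)
  intro s hs
  have hsmem : s ∈ Icc (0:ℝ) R₀ := ⟨hs.1.le, hs.2.le⟩
  have hsM : s ≤ M := le_trans hs.2.le hRM
  have hfs := hfmem s hsmem
  have hfge := hPart1 s hsmem
  have hfpos : 0 < f s := lt_of_lt_of_le hs.1 hfge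
  have hv : 0 < sn K₁ (f s) := by
    apply sn_pos le_rfl hK₁ hfpos
    nlinarith [hle_pi2 (f s) hfs.2, Real.pi_pos]
  have hvk : 0 < sn K₁ (f s) ^ (k - 1) := pow_pos hv _
  have hode := hfode s hs
  rcases eq_or_lt_of_le hKK with hKeq | hKlt
  · -- K = K₁ : f s = s and f' s = 1
    subst hKeq
    have hfeqs : f s = s := by
      have heqs := hfeq s hsmem
      by_contra hne
      have hlt : s < f s := lt_of_le_of_ne hfge (Ne.symm hne)
      have : Fsn K k s < Fsn K k (f s) := by
        apply Fsn_lt K k hlt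
        intro r hr
        apply sn_pos le_rfl hK₁ (lt_of_le_of_lt hs.1.le hr.1)
        nlinarith [hle_pi2 (f s) hfs.2, Real.pi_pos, mul_lt_mul_of_pos_right hr.2 hb]
      linarith
    rw [hfeqs] at hode hvk
    nlinarith [hvk, hode]
  · -- K < K₁ : use the star lemma
    have hstar : sn K₁ (f s) ≤ sn K s :=
      star_lemma k hKlt hK₁ hfs.1 (hle_pi2 (f s) hfs.2) hs.1.le (hle_pi2 s hsM)
        (hfeq s hsmem)
    have hpow : sn K₁ (f s) ^ (k - 1) ≤ sn K s ^ (k - 1) :=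
      pow_le_pow_left₀ hv.le hstar _
    have h1 : 1 * sn K₁ (f s) ^ (k - 1) ≤ f' s * sn K₁ (f s) ^ (k - 1) := by
      rw [one_mul, hode]
      exact hpow
    exact le_of_mul_le_mul_right h1 hvk
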